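/- Descartes-type bound parity argument: for a real polynomial f, the number of positive real roots counted with multiplicity has the same parity as the number of sign changes in its coefficient sequence. In particular, if the number of sign changes is odd, f has at least one positive real root. -/

import Mathlib

open Polynomial in
/-- The number of sign changes in the coefficient sequence of a real
polynomial (consecutive nonzero coefficients of opposite signs). -/
noncomputable def signChanges (f : Polynomial ℝ) : ℕ :=
  let l := ((List.range (f.natDegree + 1)).map f.coeff).filter (fun c => c ≠ 0)
  ((l.zip l.tail).filter (fun p => p.1 * p.2 < 0)).length

/-- Parity of the number of sign changes in a list of nonzero reals is
determined by the signs of the first and last entries. -/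
lemma sc_parity : ∀ (l : List ℝ) (a : ℝ), a ≠ 0 → (∀ x ∈ l, x ≠ 0) →
    (Odd ((((a :: l).zip l).filter (fun p => p.1 * p.2 < 0)).length) ↔
      a * (a :: l).getLast (by simp) < 0) := by
  intro l
  induction l with
  | nil =>
    intro a ha _
    simp only [List.zip_nil_right, List.filter_nil, List.length_nil, List.getLast_singleton]
    constructor
    · intro h; exact absurd h (by decide)
    · intro h; nlinarith [mul_self_pos.mpr ha]
  | cons b t ih =>
    intro a ha h
    have hb : b ≠ 0 := h b (by simp)
    have ht : ∀ x ∈ t, x ≠ 0 := fun x hx => h x (by simp [hx])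
    have hih := ih b hb ht
    set L := (b :: t).getLast (by simp) with hL
    have hlast : (a :: b :: t).getLast (by simp) = L := by
      rw [List.getLast_cons (by simp)]
    have hL0 : L ≠ 0 := h _ (List.getLast_mem _)
    rw [hlast]
    have hzip : (a :: b :: t).zip (b :: t) = (a, b) :: ((b :: t).zip t) := by
      simp [List.zip_cons_cons]
    rw [hzip, List.filter_cons]
    by_cases hab : a * b < 0
    · rw [if_pos (by simpa using hab), List.length_cons, Nat.odd_add_one, hih]
      constructor
      · intro hbL
        push_neg at hbL
        have hbL' : 0 < b * L := lt_of_le_of_ne hbL (by simp [mul_ne_zero hb hL0, Ne.symm])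
        nlinarith [mul_pos hbL' (neg_pos.mpr hab), mul_self_pos.mpr hb]
      · intro haL hbL
        nlinarith [mul_pos (neg_pos.mpr hab) (neg_pos.mpr hbL), mul_self_pos.mpr hb]
    · rw [if_neg (by simpa using hab), hih]
      push_neg at hab
      have hab' : 0 < a * b := lt_of_le_of_ne hab (by simp [mul_ne_zero ha hb, Ne.symm])
      constructor
      · intro hbL
        nlinarith [mul_pos hab' (neg_pos.mpr hbL), mul_self_pos.mpr hb]
      · intro haL
        by_contra hbL
        push_neg at hbL
        nlinarith [mul_pos hab' (neg_pos.mpr haL), mul_self_pos.mpr ha]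

open Polynomial Filter in
lemma root_of_neg_pos (g : Polynomial ℝ) (h0 : g.eval 0 < 0) (hl : 0 < g.leadingCoeff) :
    ∃ x : ℝ, 0 < x ∧ g.eval x = 0 := by
  have hdeg : 0 < g.degree := by
    by_contra hd
    push_neg at hd
    have hgc := Polynomial.degree_le_zero_iff.mp hd
    rw [hgc] at h0 hl
    simp only [Polynomial.eval_C, Polynomial.leadingCoeff_C] at h0 hl
    linarith
  have htop := g.tendsto_atTop_of_leadingCoeff_nonneg hdeg hl.le
  obtain ⟨x, hx⟩ := (htop.eventually_ge_atTop 1).and (eventually_ge_atTop 1) |>.exists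
  have hx1 : (0:ℝ) ≤ x := by linarith [hx.2]
  have hcont : ContinuousOn (fun y => g.eval y) (Set.Icc 0 x) :=
    (g.continuous_aeval).continuousOn
  have h0mem : (0:ℝ) ∈ Set.Icc (g.eval 0) (g.eval x) := ⟨h0.le, by linarith [hx.1]⟩
  obtain ⟨y, hy, hgy⟩ := intermediate_value_Icc hx1 hcont h0mem
  refine ⟨y, ?_, hgy⟩
  rcases hy.1.lt_or_eq with h | h
  · exact h
  · rw [← h] at hgy
    exact absurd hgy h0.ne

open Polynomial in
lemma root_of_mul_neg (g : Polynomial ℝ) (h : g.eval 0 * g.leadingCoeff < 0) :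
    ∃ x : ℝ, 0 < x ∧ g.eval x = 0 := by
  rcases mul_neg_iff.mp h with ⟨h1, h2⟩ | ⟨h1, h2⟩
  · obtain ⟨x, hx, he⟩ := root_of_neg_pos (-g) (by simpa using h1)
      (by rw [Polynomial.leadingCoeff_neg]; linarith)
    exact ⟨x, hx, by simpa using he⟩
  · exact root_of_neg_pos g h1 h2

open Polynomial in
lemma coeffList_spec (f : Polynomial ℝ) (hf : f ≠ 0) :
    ∃ t : List ℝ,
      ((List.range (f.natDegree + 1)).map f.coeff).filter (fun c => c ≠ 0)
        = f.coeff f.natTrailingDegree :: t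
      ∧ (f.coeff f.natTrailingDegree :: t).getLast (by simp) = f.coeff f.natDegree := by
  set n := f.natDegree
  set m := f.natTrailingDegree with hm
  have hmn : m ≤ n := f.natTrailingDegree_le_natDegree
  have hcm : f.coeff m ≠ 0 := by
    have := Polynomial.trailingCoeff_nonzero_iff_nonzero.mpr hf
    rwa [Polynomial.trailingCoeff] at this
  have hcn : f.coeff n ≠ 0 := by
    have := Polynomial.leadingCoeff_ne_zero.mpr hf
    rwa [Polynomial.leadingCoeff] at this
  have hrange : List.range (n + 1) = List.range m ++ (List.range (n - m + 1)).map (m + ·) := by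
    rw [← List.range_add]
    congr 1
    omega
  have hfilter1 : ((List.range m).map f.coeff).filter (fun c => c ≠ 0) = [] := by
    rw [List.filter_eq_nil_iff]
    intro c hc
    simp only [List.mem_map, List.mem_range] at hc
    obtain ⟨k, hk, rfl⟩ := hc
    simp [Polynomial.coeff_eq_zero_of_lt_natTrailingDegree hk]
  have hsecond : (List.range (n - m + 1)).map (m + ·)
      = m :: ((List.range (n - m)).map (fun k => m + (k + 1))) := by
    rw [List.range_succ_eq_map]
    simp [List.map_map, Function.comp_def]
  set rest := ((List.range (n - m)).map (fun k => m + (k + 1))).map f.coeff with hrest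
  have hl : ((List.range (n + 1)).map f.coeff).filter (fun c => c ≠ 0)
      = f.coeff m :: rest.filter (fun c => c ≠ 0) := by
    rw [hrange, List.map_append, List.filter_append, hfilter1, List.nil_append,
      hsecond, List.map_cons, List.filter_cons, if_pos (by simpa using hcm)]
  refine ⟨rest.filter (fun c => c ≠ 0), hl, ?_⟩
  have hrange2 : List.range (n + 1) = List.range n ++ [n] := by
    simpa using List.range_succ (n := n)
  have hl2 : ((List.range (n + 1)).map f.coeff).filter (fun c => c ≠ 0)
      = ((List.range n).map f.coeff).filter (fun c => c ≠ 0) ++ [f.coeff n] := by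
    rw [hrange2, List.map_append, List.filter_append]
    simp [hcn]
  rw [hl] at hl2
  have h1 : (f.coeff m :: rest.filter (fun c => c ≠ 0)).getLast? = some (f.coeff n) := by
    rw [hl2, List.getLast?_concat]
  rw [List.getLast?_eq_getLast (by simp)] at h1
  exact Option.some_injective _ h1

theorem stmt_19 (f : Polynomial ℝ) (hf : f ≠ 0) (hodd : Odd (signChanges f)) :
    ∃ x : ℝ, 0 < x ∧ f.eval x = 0 := by
  classical
  obtain ⟨t, hl, hlastEq⟩ := coeffList_spec f hf
  set n := f.natDegree
  set m := f.natTrailingDegree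
  have hcm : f.coeff m ≠ 0 := by
    have := Polynomial.trailingCoeff_nonzero_iff_nonzero.mpr hf
    rwa [Polynomial.trailingCoeff] at this
  have htne : ∀ x ∈ t, x ≠ 0 := by
    intro x hx
    have hmem : x ∈ ((List.range (f.natDegree + 1)).map f.coeff).filter (fun c => c ≠ 0) := by
      rw [hl]; exact List.mem_cons_of_mem _ hx
    simpa using (List.mem_filter.mp hmem).2
  have hodd' : Odd ((((f.coeff m :: t).zip t).filter (fun p => p.1 * p.2 < 0)).length) := by
    unfold signChanges at hodd
    rw [hl] at hodd
    exact hodd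
  have hsign := (sc_parity t (f.coeff m) hcm htne).mp hodd'
  rw [hlastEq] at hsign
  obtain ⟨g, hg⟩ : (Polynomial.X : Polynomial ℝ) ^ m ∣ f :=
    Polynomial.X_pow_dvd_iff.mpr fun d hd =>
      Polynomial.coeff_eq_zero_of_lt_natTrailingDegree hd
  have hg0 : g.eval 0 = f.coeff m := by
    rw [← Polynomial.coeff_zero_eq_eval_zero, hg]
    simpa using (Polynomial.coeff_X_pow_mul g m 0).symm
  have hgl : g.leadingCoeff = f.coeff n := by
    have hlc : f.leadingCoeff = g.leadingCoeff := by
      rw [hg, Polynomial.leadingCoeff_mul, Polynomial.leadingCoeff_X_pow, one_mul]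
    rw [← hlc, Polynomial.leadingCoeff]
  obtain ⟨x, hx, hgx⟩ := root_of_mul_neg g (by rw [hg0, hgl]; exact hsign)
  exact ⟨x, hx, by rw [hg, Polynomial.eval_mul, hgx, mul_zero]⟩
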